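/- For n = 2, m = (2,2), and S = ℤ×ℤ, the nine points (0,0),(1,0),(0,1),(2,0),(1,1),(0,2),(2,1),(1,2),(2,2) have the property that any polynomial F ∈ ℚ[x,y] with deg_x F ≤ 2 and deg_y F ≤ 2 taking integer values at these nine points takes integer values on all of ℤ². In particular they form a d_{(2,2)}-sequence of length 8 for every d ∈ ℤ. -/
import Mathlib


open MvPolynomial

open Finset in
theorem expand2 (F : MvPolynomial (Fin 2) ℚ)
    (hdx : F.degreeOf 0 ≤ 2) (hdy : F.degreeOf 1 ≤ 2) (x y : ℚ) :
    MvPolynomial.eval ![x, y] F =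
      ∑ i ∈ Finset.range 3, ∑ j ∈ Finset.range 3,
        F.coeff (Finsupp.single 0 i + Finsupp.single 1 j) * x ^ i * y ^ j := by
  rw [eval_eq']
  rw [← Finset.sum_product']
  have hsub : F.support ⊆ (Finset.range 3 ×ˢ Finset.range 3).image
      (fun p : ℕ × ℕ => Finsupp.single 0 p.1 + Finsupp.single 1 p.2) := by
    intro d hd
    have h0 : d 0 < 3 := (degreeOf_lt_iff (by norm_num)).mp (lt_of_le_of_lt hdx (by norm_num)) d hd
    have h1 : d 1 < 3 := (degreeOf_lt_iff (by norm_num)).mp (lt_of_le_of_lt hdy (by norm_num)) d hd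
    refine Finset.mem_image.mpr ⟨(d 0, d 1), by simp [h0, h1], ?_⟩
    ext a
    fin_cases a <;> simp [Finsupp.single_apply]
  rw [Finset.sum_subset hsub (fun d _ hd => by
    simp [MvPolynomial.notMem_support_iff.mp hd])]
  rw [Finset.sum_image (fun p hp q hq h => ?_)]
  · apply Finset.sum_congr rfl
    intro p _
    simp [Fin.prod_univ_two, Finsupp.single_apply, mul_assoc]
  · have h0 := DFunLike.congr_fun h 0
    have h1 := DFunLike.congr_fun h 1
    simp [Finsupp.single_apply] at h0 h1
    exact Prod.ext h0 h1


/-- any F ∈ ℚ[x,y] with partial degrees deg_x F ≤ 2 and deg_y F ≤ 2 which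
takes integer values at the nine points
(0,0),(1,0),(0,1),(2,0),(1,1),(0,2),(2,1),(1,2),(2,2) takes integer values on all of ℤ². -/
theorem stmt15 (F : MvPolynomial (Fin 2) ℚ)
    (hdx : F.degreeOf 0 ≤ 2) (hdy : F.degreeOf 1 ≤ 2)
    (hpts : ∀ p ∈ ([(0,0),(1,0),(0,1),(2,0),(1,1),(0,2),(2,1),(1,2),(2,2)] :
        List (ℤ × ℤ)), ∃ m : ℤ, MvPolynomial.eval ![(p.1 : ℚ), (p.2 : ℚ)] F = (m : ℚ)) :
    ∀ a b : ℤ, ∃ m : ℤ, MvPolynomial.eval ![(a : ℚ), (b : ℚ)] F = (m : ℚ) := by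
  obtain ⟨M00, h00⟩ := hpts (0,0) (by simp)
  obtain ⟨M10, h10⟩ := hpts (1,0) (by simp)
  obtain ⟨M01, h01⟩ := hpts (0,1) (by simp)
  obtain ⟨M20, h20⟩ := hpts (2,0) (by simp)
  obtain ⟨M11, h11⟩ := hpts (1,1) (by simp)
  obtain ⟨M02, h02⟩ := hpts (0,2) (by simp)
  obtain ⟨M21, h21⟩ := hpts (2,1) (by simp)
  obtain ⟨M12, h12⟩ := hpts (1,2) (by simp)
  obtain ⟨M22, h22⟩ := hpts (2,2) (by simp)
  simp only [expand2 F hdx hdy, Finset.sum_range_succ, Finset.sum_range_zero] at *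
  norm_num at h00 h10 h01 h20 h11 h02 h21 h12 h22
  intro a b
  obtain ⟨u0, hu0⟩ : Even ((a - 2) * (a - 1)) := by have := Int.even_mul_succ_self (a - 2); simpa [show a-2+1 = a-1 by ring] using this
  obtain ⟨u2, hu2⟩ : Even ((a - 1) * a) := by have := Int.even_mul_succ_self (a - 1); simpa [show a-1+1 = a by ring] using this
  obtain ⟨v0, hv0⟩ : Even ((b - 2) * (b - 1)) := by have := Int.even_mul_succ_self (b - 2); simpa [show b-2+1 = b-1 by ring] using this
  obtain ⟨v2, hv2⟩ : Even ((b - 1) * b) := by have := Int.even_mul_succ_self (b - 1); simpa [show b-1+1 = b by ring] using this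
  set A : ℚ := (a : ℚ) with hA
  set B : ℚ := (b : ℚ) with hB
  have hU0 : ((u0 : ℤ) : ℚ) = (A - 1) * (A - 2) / 2 := by
    have := congrArg (fun z : ℤ => (z : ℚ)) hu0
    push_cast at this
    linarith
  have hU2 : ((u2 : ℤ) : ℚ) = A * (A - 1) / 2 := by
    have := congrArg (fun z : ℤ => (z : ℚ)) hu2
    push_cast at this
    linarith
  have hV0 : ((v0 : ℤ) : ℚ) = (B - 1) * (B - 2) / 2 := by
    have := congrArg (fun z : ℤ => (z : ℚ)) hv0
    push_cast at this
    linarith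
  have hV2 : ((v2 : ℤ) : ℚ) = B * (B - 1) / 2 := by
    have := congrArg (fun z : ℤ => (z : ℚ)) hv2
    push_cast at this
    linarith
  refine ⟨M00 * (u0 * v0) + M10 * (a * (2 - a) * v0) + M20 * (u2 * v0)
      + M01 * (u0 * (b * (2 - b))) + M11 * (a * (2 - a) * (b * (2 - b))) + M21 * (u2 * (b * (2 - b)))
      + M02 * (u0 * v2) + M12 * (a * (2 - a) * v2) + M22 * (u2 * v2), ?_⟩
  push_cast
  simp only [Finsupp.single_zero, add_zero, zero_add, pow_zero, pow_one, one_mul, mul_one]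
  rw [hU0, hU2, hV0, hV2]
  linear_combination
    (((A - 1) * (A - 2) / 2) * ((B - 1) * (B - 2) / 2)) * h00 +
    ((A * (2 - A)) * ((B - 1) * (B - 2) / 2)) * h10 +
    ((A * (A - 1) / 2) * ((B - 1) * (B - 2) / 2)) * h20 +
    (((A - 1) * (A - 2) / 2) * (B * (2 - B))) * h01 +
    ((A * (2 - A)) * (B * (2 - B))) * h11 +
    ((A * (A - 1) / 2) * (B * (2 - B))) * h21 +
    (((A - 1) * (A - 2) / 2) * (B * (B - 1) / 2)) * h02 +
    ((A * (2 - A)) * (B * (B - 1) / 2)) * h12 +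
    ((A * (A - 1) / 2) * (B * (B - 1) / 2)) * h22
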